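/- Assume the support Σ_T is isotropic. Then in the Lie algebra on V defined by [X,Y] := 2 T X Y, the subspace 𝔞 := {X ∈ V : T X = 0} = Σ_T^⊥ is an abelian ideal (i.e. [X, a] ∈ 𝔞 for all X ∈ V, a ∈ 𝔞, and [a, b] = 0 for a, b ∈ 𝔞) whose dimension satisfies dim 𝔞 ≥ (dim V)/2. -/

import Mathlib

/-- Assume the support `Σ_T` is isotropic. In the Lie algebra on `V`
with `[X,Y] := 2 T X Y`, the subspace `𝔞 := ker T = Σ_T^⊥` is an abelian ideal of
dimension at least `(dim V)/2`. -/
theorem kernel_is_large_abelian_ideal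
    {V : Type*} [AddCommGroup V] [Module ℝ V] [FiniteDimensional ℝ V]
    (B : V →ₗ[ℝ] V →ₗ[ℝ] ℝ)
    (hBsymm : ∀ x y : V, B x y = B y x)
    (hBnd : ∀ x : V, (∀ y : V, B x y = 0) → x = 0)
    (T : V →ₗ[ℝ] V →ₗ[ℝ] V)
    (halt₁ : ∀ X Y Z : V, B (T X Y) Z = - B (T Y X) Z)
    (halt₂ : ∀ X Y Z : V, B (T X Y) Z = - B (T X Z) Y)
    (halt₃ : ∀ X Y Z : V, B (T X Y) Z = - B (T Z Y) X)
    (hiso : ∀ u ∈ Submodule.span ℝ {w : V | ∃ X Y : V, T X Y = w},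
      ∀ v ∈ Submodule.span ℝ {w : V | ∃ X Y : V, T X Y = w}, B u v = 0) :
    -- 𝔞 = ker T equals the orthogonal complement of the support
    (∀ X : V, X ∈ LinearMap.ker T ↔
      (∀ w ∈ Submodule.span ℝ {w : V | ∃ X Y : V, T X Y = w}, B X w = 0)) ∧
    -- 𝔞 is an ideal: [X, a] ∈ 𝔞 for all X ∈ V, a ∈ 𝔞
    (∀ X : V, ∀ a ∈ LinearMap.ker T, (2 : ℝ) • T X a ∈ LinearMap.ker T) ∧
    -- 𝔞 is abelian: [a, b] = 0 for a, b ∈ 𝔞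
    (∀ a ∈ LinearMap.ker T, ∀ b ∈ LinearMap.ker T, (2 : ℝ) • T a b = 0) ∧
    -- dim 𝔞 ≥ (dim V)/2
    (Module.finrank ℝ V ≤ 2 * Module.finrank ℝ ↥(LinearMap.ker T)) := by
  set S : Set V := {w : V | ∃ X Y : V, T X Y = w} with hS
  set Sig : Submodule ℝ V := Submodule.span ℝ S with hSig
  -- key characterization
  have hker : ∀ X : V, X ∈ LinearMap.ker T ↔ (∀ w ∈ Sig, B X w = 0) := by
    intro X
    constructor
    · intro hX w hw
      have hX' : T X = 0 := hX
      have : w ∈ LinearMap.ker (B X) := by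
        apply Submodule.span_le.mpr ?_ hw
        rintro w ⟨Y, Z, rfl⟩
        simp only [SetLike.mem_coe, LinearMap.mem_ker]
        rw [hBsymm, halt₃, hX']
        simp
      exact this
    · intro h
      have : ∀ Y, T X Y = 0 := by
        intro Y
        apply hBnd
        intro Z
        rw [halt₃, hBsymm]
        rw [h (T Z Y) (Submodule.subset_span ⟨Z, Y, rfl⟩)]
        simp
      exact LinearMap.ext this
  have hSigker : Sig ≤ LinearMap.ker T := by
    rw [hSig]
    apply Submodule.span_le.mpr
    rintro w ⟨X0, Y0, rfl⟩
    rw [SetLike.mem_coe, hker]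
    intro w hw
    exact hiso _ (Submodule.subset_span ⟨X0, Y0, rfl⟩) w hw
  refine ⟨hker, ?_, ?_, ?_⟩
  · intro X a _
    have : T X a ∈ Sig := Submodule.subset_span ⟨X, a, rfl⟩
    exact Submodule.smul_mem _ _ (hSigker this)
  · intro a ha b _
    have ha' : T a = 0 := ha
    rw [ha']
    simp
  · -- dimension count
    set b : LinearMap.BilinForm ℝ V := B with hb
    have hrefl : b.IsRefl := by
      intro x y h
      rw [hBsymm] at h; exact h
    have hnd : b.Nondegenerate := (LinearMap.IsRefl.nondegenerate_iff_separatingLeft hrefl).mpr hBnd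
    have horth : LinearMap.ker T = b.orthogonal Sig := by
      ext X
      rw [hker]
      constructor
      · intro h w hw
        have := h w hw
        rwa [hBsymm]
      · intro h w hw
        have := h w hw
        rwa [hBsymm] at this
    have hdim := LinearMap.BilinForm.finrank_orthogonal hnd Sig
    rw [← horth] at hdim
    have h1 : Module.finrank ℝ Sig ≤ Module.finrank ℝ (LinearMap.ker T) :=
      Submodule.finrank_mono hSigker
    have h2 : Module.finrank ℝ Sig ≤ Module.finrank ℝ V := Submodule.finrank_le Sig
    omega
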